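/- The conditional entropy functional defining quantum discord is concave on the convex set of POVMs: if E = λC + (1−λ)D is a convex combination of POVMs C and D on A (0 ≤ λ ≤ 1), then F(ρ_B, E) ≥ λF(ρ_B, C) + (1−λ)F(ρ_B, D), where F(ρ_B, E) = Σ_j p_{E_j} H(ρ_{B|E_j}). -/

import Mathlib

open Matrix Kronecker ComplexOrder

/-- Von Neumann entropy of a (Hermitian) matrix. -/
noncomputable def vnEntropy {n : Type*} [Fintype n] [DecidableEq n]
    (A : Matrix n n ℂ) : ℝ :=
  if h : A.IsHermitian then ∑ i, Real.negMulLog (h.eigenvalues i) else 0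

/-- Partial trace over the first subsystem. -/
noncomputable def ptrFst {α β : Type*} [Fintype α]
    (ρ : Matrix (α × β) (α × β) ℂ) : Matrix β β ℂ :=
  Matrix.of fun j j' => ∑ i, ρ (i, j) (i, j')

/-- Outcome probability `p_E = tr(ρ (E ⊗ I))` for a POVM element `E` on the first
subsystem. -/
noncomputable def measProb {α β : Type*} [Fintype α] [Fintype β] [DecidableEq α] [DecidableEq β]
    (ρ : Matrix (α × β) (α × β) ℂ) (E : Matrix α α ℂ) : ℝ :=
  ((ρ * (E ⊗ₖ (1 : Matrix β β ℂ))).trace).re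

/-- Post-measurement state `ρ_{B|E} = tr_A(ρ (E ⊗ I)) / p_E`. -/
noncomputable def povmPost {α β : Type*} [Fintype α] [Fintype β] [DecidableEq α] [DecidableEq β]
    (ρ : Matrix (α × β) (α × β) ℂ) (E : Matrix α α ℂ) : Matrix β β ℂ :=
  (measProb ρ E)⁻¹ • ptrFst (ρ * (E ⊗ₖ (1 : Matrix β β ℂ)))

/-- The conditional entropy functional `F(ρ_B, E) = Σ_j p_{E_j} H(ρ_{B|E_j})`. -/
noncomputable def condEntF {α β ι : Type*} [Fintype α] [Fintype β] [DecidableEq α]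
    [DecidableEq β] [Fintype ι]
    (ρ : Matrix (α × β) (α × β) ℂ) (E : ι → Matrix α α ℂ) : ℝ :=
  ∑ j, measProb ρ (E j) * vnEntropy (povmPost ρ (E j))

section Aux
open Real

/-- Two-term log-sum inequality. -/
lemma logsum_two {u U v V : ℝ} (hu : 0 ≤ u) (hv : 0 ≤ v) (huU : u ≤ U) (hvV : v ≤ V) :
    (u + v) * Real.log ((u + v) / (U + V)) ≤ u * Real.log (u / U) + v * Real.log (v / V) := by
  have hU : 0 ≤ U := hu.trans huU
  have hV : 0 ≤ V := hv.trans hvV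
  rcases eq_or_lt_of_le hU with hU0 | hU0
  · have hu0 : u = 0 := le_antisymm (huU.trans hU0.ge) hu
    simp [← hU0, hu0]
  rcases eq_or_lt_of_le hV with hV0 | hV0
  · have hv0 : v = 0 := le_antisymm (hvV.trans hV0.ge) hv
    simp [← hV0, hv0]
  rcases eq_or_lt_of_le hu with hu0 | hu0
  · simp only [← hu0, zero_mul, zero_add, zero_div, add_zero]
    rcases eq_or_lt_of_le hv with hv0 | hv0
    · simp [← hv0]
    · have : Real.log (v / (U + V)) ≤ Real.log (v / V) := by
        apply Real.log_le_log (by positivity)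
        apply div_le_div_of_nonneg_left hv hV0 (by linarith)
      nlinarith
  rcases eq_or_lt_of_le hv with hv0 | hv0
  · simp only [← hv0, zero_mul, add_zero, zero_div]
    have : Real.log (u / (U + V)) ≤ Real.log (u / U) := by
      apply Real.log_le_log (by positivity)
      apply div_le_div_of_nonneg_left hu hU0 (by linarith)
    nlinarith
  -- main case: everything positive
  have hUV : 0 < U + V := by linarith
  have huv : 0 < u + v := by linarith
  have h1 : Real.log (((u + v) * U) / ((U + V) * u)) ≤ ((u + v) * U) / ((U + V) * u) - 1 :=
    Real.log_le_sub_one_of_pos (by positivity)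
  have h2 : Real.log (((u + v) * V) / ((U + V) * v)) ≤ ((u + v) * V) / ((U + V) * v) - 1 :=
    Real.log_le_sub_one_of_pos (by positivity)
  have e1 : Real.log (((u + v) * U) / ((U + V) * u))
      = Real.log ((u + v) / (U + V)) - Real.log (u / U) := by
    rw [Real.log_div (by positivity) (by positivity), Real.log_div (by positivity) hU0.ne',
      Real.log_div huv.ne' hUV.ne', Real.log_mul huv.ne' hU0.ne',
      Real.log_mul hUV.ne' hu0.ne']
    ring
  have e2 : Real.log (((u + v) * V) / ((U + V) * v))
      = Real.log ((u + v) / (U + V)) - Real.log (v / V) := by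
    rw [Real.log_div (by positivity) (by positivity), Real.log_div (by positivity) hV0.ne',
      Real.log_div huv.ne' hUV.ne', Real.log_mul huv.ne' hV0.ne',
      Real.log_mul hUV.ne' hv0.ne']
    ring
  have c1 : u * (((u + v) * U) / ((U + V) * u)) = (u + v) * U / (U + V) := by
    field_simp
  have c2 : v * (((u + v) * V) / ((U + V) * v)) = (u + v) * V / (U + V) := by
    field_simp
  have b1 : u * Real.log (((u + v) * U) / ((U + V) * u)) ≤ (u + v) * U / (U + V) - u := by
    calc u * Real.log (((u + v) * U) / ((U + V) * u))
        ≤ u * (((u + v) * U) / ((U + V) * u) - 1) := by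
          exact mul_le_mul_of_nonneg_left h1 hu
      _ = (u + v) * U / (U + V) - u := by rw [mul_sub, c1]; ring
  have b2 : v * Real.log (((u + v) * V) / ((U + V) * v)) ≤ (u + v) * V / (U + V) - v := by
    calc v * Real.log (((u + v) * V) / ((U + V) * v))
        ≤ v * (((u + v) * V) / ((U + V) * v) - 1) := by
          exact mul_le_mul_of_nonneg_left h2 hv
      _ = (u + v) * V / (U + V) - v := by rw [mul_sub, c2]; ring
  rw [e1] at b1; rw [e2] at b2
  have hsum : (u + v) * U / (U + V) + ((u + v) * V / (U + V)) = u + v := by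
    field_simp
  nlinarith [b1, b2]

lemma nml_eq {x y : ℝ} (hx : 0 ≤ x) (hxy : x ≤ y) :
    Real.negMulLog x + x * Real.log y = -(x * Real.log (x / y)) := by
  rcases eq_or_lt_of_le hx with hx0 | hx0
  · simp [← hx0, Real.negMulLog]
  · have hy : 0 < y := hx0.trans_le hxy
    rw [Real.log_div hx0.ne' hy.ne', Real.negMulLog]
    ring

lemma scale_log {t a q : ℝ} (ht : 0 ≤ t) (ha : 0 ≤ a) :
    (t * a) * Real.log ((t * a) / (t * q)) = t * (a * Real.log (a / q)) := by
  rcases eq_or_lt_of_le ht with ht0 | ht0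
  · simp [← ht0]
  · rw [mul_div_mul_left _ _ ht0.ne']
    ring

lemma scalar_key {t q r a b : ℝ} (ht0 : 0 ≤ t) (ht1 : t ≤ 1)
    (ha : 0 ≤ a) (hb : 0 ≤ b) (haq : a ≤ q) (hbr : b ≤ r) :
    t * (Real.negMulLog a + a * Real.log q) + (1 - t) * (Real.negMulLog b + b * Real.log r)
      ≤ Real.negMulLog (t * a + (1 - t) * b)
        + (t * a + (1 - t) * b) * Real.log (t * q + (1 - t) * r) := by
  have h1t : 0 ≤ 1 - t := by linarith
  have key := logsum_two (u := t * a) (U := t * q) (v := (1 - t) * b) (V := (1 - t) * r)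
    (by positivity) (by positivity)
    (mul_le_mul_of_nonneg_left haq ht0) (mul_le_mul_of_nonneg_left hbr h1t)
  have eL : Real.negMulLog (t * a + (1 - t) * b)
      + (t * a + (1 - t) * b) * Real.log (t * q + (1 - t) * r)
      = -((t * a + (1 - t) * b) * Real.log ((t * a + (1 - t) * b) / (t * q + (1 - t) * r))) :=
    nml_eq (by positivity) (by nlinarith)
  have ea : Real.negMulLog a + a * Real.log q = -(a * Real.log (a / q)) := nml_eq ha haq
  have eb : Real.negMulLog b + b * Real.log r = -(b * Real.log (b / r)) := nml_eq hb hbr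
  rw [eL, ea, eb]
  rw [scale_log ht0 ha, scale_log h1t hb] at key
  linarith

end Aux

section MatrixAux

variable {α β : Type*} [Fintype α] [Fintype β] [DecidableEq α] [DecidableEq β]

omit [DecidableEq α] [DecidableEq β] in
lemma ptrFst_trace (M : Matrix (α × β) (α × β) ℂ) : (ptrFst M).trace = M.trace := by
  simp only [ptrFst, Matrix.trace, Matrix.diag, Fintype.sum_prod_type, Matrix.of_apply]
  exact Finset.sum_comm

omit [Fintype β] [DecidableEq α] [DecidableEq β] in
lemma ptrFst_add (M N : Matrix (α × β) (α × β) ℂ) :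
    ptrFst (M + N) = ptrFst M + ptrFst N := by
  ext j j'; simp [ptrFst, Finset.sum_add_distrib]

omit [Fintype β] [DecidableEq α] [DecidableEq β] in
lemma ptrFst_smul (r : ℝ) (M : Matrix (α × β) (α × β) ℂ) :
    ptrFst (r • M) = r • ptrFst M := by
  ext j j'; simp [ptrFst, Finset.smul_sum]

omit [DecidableEq α] [DecidableEq β] in
lemma ptrFst_posSemidef {M : Matrix (α × β) (α × β) ℂ} (hM : M.PosSemidef) :
    (ptrFst M).PosSemidef := by
  classical
  rw [Matrix.posSemidef_iff_dotProduct_mulVec]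
  constructor
  · have h := hM.1
    ext j j'
    have happ : ∀ p q : α × β, (star (M p q)) = M q p := fun p q => congrFun (congrFun h q) p
    simp only [conjTranspose_apply, ptrFst, Matrix.of_apply, star_sum]
    exact Finset.sum_congr rfl fun i _ => happ (i, j') (i, j)
  · intro x
    have inner : ∀ i : α, dotProduct (star (fun p : α × β => if p.1 = i then x p.2 else 0))
        (M *ᵥ (fun p : α × β => if p.1 = i then x p.2 else 0))
        = ∑ j, ∑ j', star (x j) * (M (i, j) (i, j') * x j') := by
      intro i
      simp only [dotProduct, mulVec, Pi.star_apply, Fintype.sum_prod_type, apply_ite, star_zero,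
        ite_mul, zero_mul, mul_ite, mul_zero, Finset.sum_ite_irrel, Finset.sum_const_zero,
        Finset.sum_ite_eq', Finset.mem_univ, if_true, Finset.mul_sum]
    have key : dotProduct (star x) (ptrFst M *ᵥ x)
        = ∑ i, dotProduct (star (fun p : α × β => if p.1 = i then x p.2 else 0))
            (M *ᵥ (fun p : α × β => if p.1 = i then x p.2 else 0)) := by
      rw [Finset.sum_congr rfl (fun i (_ : i ∈ Finset.univ) => inner i)]
      have swap : (∑ j, ∑ j', ∑ i, star (x j) * (M (i, j) (i, j') * x j'))
          = ∑ i, ∑ j, ∑ j', star (x j) * (M (i, j) (i, j') * x j') :=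
        (Finset.sum_congr rfl fun j _ => Finset.sum_comm).trans Finset.sum_comm
      rw [← swap]
      simp only [dotProduct, mulVec, ptrFst, Matrix.of_apply, Pi.star_apply,
        Finset.mul_sum, Finset.sum_mul]
    rw [key]
    exact Finset.sum_nonneg fun i _ => hM.dotProduct_mulVec_nonneg _

lemma ptrFst_cyc (M : Matrix (α × β) (α × β) ℂ) (A : Matrix α α ℂ) :
    ptrFst (M * (A ⊗ₖ (1 : Matrix β β ℂ))) = ptrFst ((A ⊗ₖ (1 : Matrix β β ℂ)) * M) := by
  ext j j'
  simp only [ptrFst, Matrix.of_apply, Matrix.mul_apply, kroneckerMap_apply, Matrix.one_apply,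
    Fintype.sum_prod_type, mul_ite, mul_zero, mul_one, ite_mul, zero_mul, one_mul,
    Finset.sum_ite_irrel, Finset.sum_const_zero, Finset.sum_ite_eq', Finset.sum_ite_eq,
    Finset.mem_univ, if_true]
  rw [Finset.sum_comm]
  exact Finset.sum_congr rfl fun i _ => Finset.sum_congr rfl fun i' _ => mul_comm _ _

lemma kron_one_hermitian {S : Matrix α α ℂ} (hS : S.IsHermitian) :
    (S ⊗ₖ (1 : Matrix β β ℂ)).IsHermitian := by
  ext p q
  have hs : ∀ a b, (star (S a b)) = S b a := fun a b => congrFun (congrFun hS b) a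
  have h1 : star ((1 : Matrix β β ℂ) q.2 p.2) = (1 : Matrix β β ℂ) p.2 q.2 := by
    rw [← Matrix.conjTranspose_apply, Matrix.conjTranspose_one]
  rw [Matrix.conjTranspose_apply, Matrix.kroneckerMap_apply, Matrix.kroneckerMap_apply,
    star_mul', hs, h1, mul_comm]

lemma sigma_posSemidef {ρ : Matrix (α × β) (α × β) ℂ} {E : Matrix α α ℂ}
    (hρ : ρ.PosSemidef) (hE : E.PosSemidef) :
    (ptrFst (ρ * (E ⊗ₖ (1 : Matrix β β ℂ)))).PosSemidef := by
  set S := (open scoped MatrixOrder in CFC.sqrt E) with hSdef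
  have hS : S.PosSemidef := by open scoped MatrixOrder in exact (CFC.sqrt_nonneg E).posSemidef
  have hSS : S * S = E := by open scoped MatrixOrder in exact CFC.sqrt_mul_sqrt_self E hE.nonneg
  have hfact : ρ * (E ⊗ₖ (1 : Matrix β β ℂ))
      = (ρ * (S ⊗ₖ (1 : Matrix β β ℂ))) * (S ⊗ₖ (1 : Matrix β β ℂ)) := by
    rw [mul_assoc, ← Matrix.mul_kronecker_mul, hSS, one_mul]
  have hherm : (S ⊗ₖ (1 : Matrix β β ℂ)).IsHermitian := kron_one_hermitian hS.1
  rw [hfact, ptrFst_cyc, ← mul_assoc]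
  apply ptrFst_posSemidef
  have := hρ.mul_mul_conjTranspose_same (S ⊗ₖ (1 : Matrix β β ℂ))
  rwa [hherm.eq] at this


end MatrixAux

set_option maxHeartbeats 1000000 in
lemma schur_jensen {n : Type*} [Fintype n] [DecidableEq n] {A : Matrix n n ℂ}
    (hA : A.PosSemidef) (V : Matrix.unitaryGroup n ℂ) :
    ∑ i, Real.negMulLog (hA.1.eigenvalues i)
      ≤ ∑ i, Real.negMulLog (((star (V : Matrix n n ℂ) * A * (V : Matrix n n ℂ)) i i).re) := by
  classical
  obtain ⟨W, hWmem, D, hD⟩ : ∃ W : Matrix n n ℂ, W ∈ Matrix.unitaryGroup n ℂ ∧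
      ∃ D : Matrix n n ℂ, (D = Matrix.diagonal (fun k => (hA.1.eigenvalues k : ℂ)) ∧
        A = W * D * star W) :=
    ⟨hA.1.eigenvectorUnitary, hA.1.eigenvectorUnitary.2,
      Matrix.diagonal (fun k => (hA.1.eigenvalues k : ℂ)), rfl, by
        exact hA.1.spectral_theorem.trans (by simp only [Unitary.conjStarAlgAut_apply]; rfl)⟩
  obtain ⟨hDdiag, hAdec⟩ := hD
  set M : Matrix n n ℂ := star (V : Matrix n n ℂ) * W with hM
  have hMmem : M ∈ Matrix.unitaryGroup n ℂ := mul_mem (Unitary.star_mem V.2) hWmem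
  have hconj : star (V : Matrix n n ℂ) * A * (V : Matrix n n ℂ) = M * D * star M := by
    rw [hAdec, hM, Matrix.star_mul, star_star]
    simp only [Matrix.mul_assoc]
  set w : n → n → ℝ := fun i k => Complex.normSq (M i k) with hw
  have hentry : ∀ i, ((star (V : Matrix n n ℂ) * A * (V : Matrix n n ℂ)) i i).re
      = ∑ k, w i k * hA.1.eigenvalues k := by
    intro i
    rw [hconj, hDdiag, Matrix.mul_apply]
    simp only [Matrix.mul_diagonal, Matrix.star_apply]
    rw [Complex.re_sum]
    refine Finset.sum_congr rfl fun k _ => ?_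
    simp only [Complex.star_def]
    have h1 : M i k * (hA.1.eigenvalues k : ℂ) * (starRingEnd ℂ) (M i k)
        = (hA.1.eigenvalues k : ℂ) * (M i k * (starRingEnd ℂ) (M i k)) := by ring
    rw [h1, Complex.mul_conj]
    simp [hw]
    ring
  have hrow : ∀ i, ∑ k, w i k = 1 := by
    intro i
    have h := Matrix.mem_unitaryGroup_iff.mp hMmem
    have h3 : (∑ k, M i k * (starRingEnd ℂ) (M i k)) = 1 := by
      have h2 := congrFun (congrFun h i) i
      simpa [Matrix.mul_apply, Matrix.star_apply, Matrix.one_apply, Complex.star_def] using h2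
    have h4 : ((∑ k, w i k : ℝ) : ℂ) = 1 := by
      push_cast
      rw [← h3]
      exact Finset.sum_congr rfl fun k _ => by simp [hw, Complex.mul_conj]
    exact_mod_cast h4
  have hcol : ∀ k, ∑ i, w i k = 1 := by
    intro k
    have h := Matrix.mem_unitaryGroup_iff'.mp hMmem
    have h3 : (∑ i, (starRingEnd ℂ) (M i k) * M i k) = 1 := by
      have h2 := congrFun (congrFun h k) k
      simpa [Matrix.mul_apply, Matrix.star_apply, Matrix.one_apply, Complex.star_def] using h2
    have h4 : ((∑ i, w i k : ℝ) : ℂ) = 1 := by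
      push_cast
      rw [← h3]
      exact Finset.sum_congr rfl fun i _ => by
        rw [mul_comm, Complex.mul_conj]
    exact_mod_cast h4
  have hjen : ∀ i, ∑ k, w i k * Real.negMulLog (hA.1.eigenvalues k)
      ≤ Real.negMulLog (∑ k, w i k * hA.1.eigenvalues k) := by
    intro i
    have := Real.concaveOn_negMulLog.le_map_sum (t := Finset.univ) (w := w i)
      (p := hA.1.eigenvalues) (fun k _ => Complex.normSq_nonneg _) (hrow i)
      (fun k _ => Set.mem_Ici.mpr (hA.eigenvalues_nonneg k))
    simpa [smul_eq_mul] using this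
  calc ∑ i, Real.negMulLog (hA.1.eigenvalues i)
      = ∑ k, (∑ i, w i k) * Real.negMulLog (hA.1.eigenvalues k) := by
        refine Finset.sum_congr rfl fun k _ => ?_
        rw [hcol k, one_mul]
    _ = ∑ i, ∑ k, w i k * Real.negMulLog (hA.1.eigenvalues k) := by
        simp only [Finset.sum_mul]
        exact Finset.sum_comm
    _ ≤ ∑ i, Real.negMulLog (∑ k, w i k * hA.1.eigenvalues k) :=
        Finset.sum_le_sum fun i _ => hjen i
    _ = ∑ i, Real.negMulLog (((star (V : Matrix n n ℂ) * A * (V : Matrix n n ℂ)) i i).re) := by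
        refine Finset.sum_congr rfl fun i _ => ?_
        rw [hentry i]

lemma vnEntropy_of_hermitian {n : Type*} [Fintype n] [DecidableEq n]
    {A : Matrix n n ℂ} (hA : A.IsHermitian) :
    vnEntropy A = ∑ i, Real.negMulLog (hA.eigenvalues i) := by
  rw [vnEntropy, dif_pos hA]

lemma nml_scale {q a : ℝ} (hq : 0 < q) (ha : 0 ≤ a) :
    q * Real.negMulLog (q⁻¹ * a) = Real.negMulLog a + a * Real.log q := by
  rcases eq_or_lt_of_le ha with ha0 | ha0
  · simp [← ha0, Real.negMulLog]
  · rw [Real.negMulLog, Real.negMulLog, Real.log_mul (inv_ne_zero hq.ne') ha0.ne',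
      Real.log_inv]
    field_simp
    ring

lemma psd_diag_re_nonneg {n : Type*} [Fintype n] [DecidableEq n]
    {M : Matrix n n ℂ} (hM : M.PosSemidef) (i : n) : 0 ≤ (M i i).re := by
  have h := hM.re_dotProduct_nonneg (Pi.single i 1)
  have e : dotProduct (star (Pi.single i 1 : n → ℂ)) (M *ᵥ Pi.single i 1) = M i i := by
    simp [dotProduct, mulVec, Pi.single_apply, Finset.sum_ite_eq, mul_ite, ite_mul,
      apply_ite, Finset.sum_ite_irrel, Finset.sum_const_zero]
  rw [e] at h
  exact h

lemma psd_trace_re_nonneg {n : Type*} [Fintype n] [DecidableEq n]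
    {M : Matrix n n ℂ} (hM : M.PosSemidef) : 0 ≤ M.trace.re := by
  rw [Matrix.trace, Complex.re_sum]
  exact Finset.sum_nonneg fun i _ => psd_diag_re_nonneg hM i

lemma psd_smul_real {n : Type*} [Fintype n] [DecidableEq n]
    {M : Matrix n n ℂ} (hM : M.PosSemidef) {c : ℝ} (hc : 0 ≤ c) :
    (c • M).PosSemidef := by
  rw [Matrix.posSemidef_iff_dotProduct_mulVec]
  constructor
  · show (c • M)ᴴ = c • M
    rw [Matrix.conjTranspose_smul, hM.1.eq]
    norm_num
  · intro x
    rw [Matrix.smul_mulVec, dotProduct_smul]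
    have h := hM.dotProduct_mulVec_nonneg x
    have : (0 : ℂ) ≤ (c : ℂ) * dotProduct (star x) (M *ᵥ x) := by
      apply mul_nonneg _ h
      rw [Complex.le_def]
      simp [hc]
    simpa [smul_eq_mul, Complex.real_smul] using this

lemma conj_unitary_psd {n : Type*} [Fintype n] [DecidableEq n] {σ : Matrix n n ℂ}
    (hσ : σ.PosSemidef) (V : Matrix.unitaryGroup n ℂ) :
    (star (V : Matrix n n ℂ) * σ * (V : Matrix n n ℂ)).PosSemidef := by
  have h := hσ.conjTranspose_mul_mul_same (B := (V : Matrix n n ℂ))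
  simpa [Matrix.star_eq_conjTranspose] using h

lemma conj_unitary_trace {n : Type*} [Fintype n] [DecidableEq n] (σ : Matrix n n ℂ)
    (V : Matrix.unitaryGroup n ℂ) :
    (star (V : Matrix n n ℂ) * σ * (V : Matrix n n ℂ)).trace = σ.trace := by
  rw [Matrix.trace_mul_cycle, Matrix.mem_unitaryGroup_iff.mp V.2, Matrix.one_mul]

lemma smul_entry_re {n : Type*} [Fintype n] [DecidableEq n] (c : ℝ) (M : Matrix n n ℂ)
    (i j : n) : ((c • M) i j).re = c * (M i j).re := by
  simp [Complex.real_smul]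

lemma conj_sum_diag_re {n : Type*} [Fintype n] [DecidableEq n] (σ : Matrix n n ℂ)
    (V : Matrix.unitaryGroup n ℂ) :
    ∑ i, ((star (V : Matrix n n ℂ) * σ * (V : Matrix n n ℂ)) i i).re = σ.trace.re := by
  rw [← conj_unitary_trace σ V, Matrix.trace, Complex.re_sum]
  rfl

lemma side_bound {n : Type*} [Fintype n] [DecidableEq n] {σ : Matrix n n ℂ}
    (hσ : σ.PosSemidef) (V : Matrix.unitaryGroup n ℂ) :
    σ.trace.re * vnEntropy ((σ.trace.re)⁻¹ • σ)
      ≤ ∑ i, (Real.negMulLog (((star (V : Matrix n n ℂ) * σ * (V : Matrix n n ℂ)) i i).re)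
          + ((star (V : Matrix n n ℂ) * σ * (V : Matrix n n ℂ)) i i).re
            * Real.log (σ.trace.re)) := by
  have hconjpsd := conj_unitary_psd hσ V
  have ha : ∀ i, 0 ≤ ((star (V : Matrix n n ℂ) * σ * (V : Matrix n n ℂ)) i i).re :=
    fun i => psd_diag_re_nonneg hconjpsd i
  have hq0 : 0 ≤ σ.trace.re := psd_trace_re_nonneg hσ
  have hsum := conj_sum_diag_re σ V
  rcases eq_or_lt_of_le hq0 with hq | hq
  · have hzero : ∀ i ∈ Finset.univ,
        ((star (V : Matrix n n ℂ) * σ * (V : Matrix n n ℂ)) i i).re = 0 :=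
      (Finset.sum_eq_zero_iff_of_nonneg (fun i _ => ha i)).mp (by rw [hsum, ← hq])
    have hrhs : ∀ i ∈ Finset.univ,
        (Real.negMulLog (((star (V : Matrix n n ℂ) * σ * (V : Matrix n n ℂ)) i i).re)
          + ((star (V : Matrix n n ℂ) * σ * (V : Matrix n n ℂ)) i i).re
            * Real.log (σ.trace.re)) = 0 := by
      intro i hi
      rw [hzero i hi]
      simp [Real.negMulLog]
    rw [Finset.sum_congr rfl hrhs, ← hq]
    simp
  · have hB : ((σ.trace.re)⁻¹ • σ).PosSemidef := psd_smul_real hσ (inv_nonneg.mpr hq0)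
    rw [vnEntropy_of_hermitian hB.1]
    have hsj := schur_jensen hB V
    have hent : ∀ i, ((star (V : Matrix n n ℂ) * ((σ.trace.re)⁻¹ • σ) * (V : Matrix n n ℂ)) i i).re
        = (σ.trace.re)⁻¹ * ((star (V : Matrix n n ℂ) * σ * (V : Matrix n n ℂ)) i i).re := by
      intro i
      rw [Matrix.mul_smul, Matrix.smul_mul, smul_entry_re]
    calc σ.trace.re * ∑ i, Real.negMulLog (hB.1.eigenvalues i)
        ≤ σ.trace.re * ∑ i, Real.negMulLog
            ((σ.trace.re)⁻¹ * ((star (V : Matrix n n ℂ) * σ * (V : Matrix n n ℂ)) i i).re) := by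
          apply mul_le_mul_of_nonneg_left _ hq0
          calc ∑ i, Real.negMulLog (hB.1.eigenvalues i)
              ≤ ∑ i, Real.negMulLog
                (((star (V : Matrix n n ℂ) * ((σ.trace.re)⁻¹ • σ) * (V : Matrix n n ℂ)) i i).re) :=
                hsj
            _ = _ := Finset.sum_congr rfl fun i _ => by rw [hent i]
      _ = _ := by
          rw [Finset.mul_sum]
          exact Finset.sum_congr rfl fun i _ => nml_scale hq (ha i)

lemma side_eq {n : Type*} [Fintype n] [DecidableEq n] {σ : Matrix n n ℂ}
    (hσ : σ.PosSemidef) (hq : 0 < σ.trace.re)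
    (hB : ((σ.trace.re)⁻¹ • σ).IsHermitian) :
    σ.trace.re * vnEntropy ((σ.trace.re)⁻¹ • σ)
      = ∑ i, (Real.negMulLog (((star (hB.eigenvectorUnitary : Matrix n n ℂ) * σ
            * (hB.eigenvectorUnitary : Matrix n n ℂ)) i i).re)
          + ((star (hB.eigenvectorUnitary : Matrix n n ℂ) * σ
            * (hB.eigenvectorUnitary : Matrix n n ℂ)) i i).re * Real.log (σ.trace.re)) := by
  have hconjpsd := conj_unitary_psd hσ hB.eigenvectorUnitary
  have ha : ∀ i, 0 ≤ ((star (hB.eigenvectorUnitary : Matrix n n ℂ) * σ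
      * (hB.eigenvectorUnitary : Matrix n n ℂ)) i i).re :=
    fun i => psd_diag_re_nonneg hconjpsd i
  rw [vnEntropy_of_hermitian hB]
  have hdiag := hB.conjStarAlgAut_star_eigenvectorUnitary
  rw [Unitary.conjStarAlgAut_star_apply] at hdiag
  have heig : ∀ i, hB.eigenvalues i
      = (σ.trace.re)⁻¹ * ((star (hB.eigenvectorUnitary : Matrix n n ℂ) * σ
        * (hB.eigenvectorUnitary : Matrix n n ℂ)) i i).re := by
    intro i
    have h2 := congrFun (congrFun hdiag i) i
    rw [Matrix.diagonal_apply_eq] at h2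
    have h3 : ((star (hB.eigenvectorUnitary : Matrix n n ℂ) * ((σ.trace.re)⁻¹ • σ)
        * (hB.eigenvectorUnitary : Matrix n n ℂ)) i i).re
        = (σ.trace.re)⁻¹ * ((star (hB.eigenvectorUnitary : Matrix n n ℂ) * σ
        * (hB.eigenvectorUnitary : Matrix n n ℂ)) i i).re := by
      rw [Matrix.mul_smul, Matrix.smul_mul, smul_entry_re]
    rw [← h3, h2]
    simp
  rw [Finset.mul_sum]
  refine Finset.sum_congr rfl fun i _ => ?_
  rw [heig i, nml_scale hq (ha i)]


section main
variable {α β : Type*} [Fintype α] [Fintype β] [DecidableEq α] [DecidableEq β]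

lemma measProb_eq (ρ : Matrix (α × β) (α × β) ℂ) (E : Matrix α α ℂ) :
    measProb ρ E = (ptrFst (ρ * (E ⊗ₖ (1 : Matrix β β ℂ)))).trace.re := by
  rw [measProb, ptrFst_trace]

lemma povmPost_eq (ρ : Matrix (α × β) (α × β) ℂ) (E : Matrix α α ℂ) :
    povmPost ρ E = ((ptrFst (ρ * (E ⊗ₖ (1 : Matrix β β ℂ)))).trace.re)⁻¹
      • ptrFst (ρ * (E ⊗ₖ (1 : Matrix β β ℂ))) := by
  rw [povmPost, measProb_eq]

lemma sigma_lin (ρ : Matrix (α × β) (α × β) ℂ) (Cj Dj : Matrix α α ℂ) (t : ℝ) :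
    ptrFst (ρ * ((t • Cj + (1 - t) • Dj) ⊗ₖ (1 : Matrix β β ℂ)))
      = t • ptrFst (ρ * (Cj ⊗ₖ (1 : Matrix β β ℂ)))
        + (1 - t) • ptrFst (ρ * (Dj ⊗ₖ (1 : Matrix β β ℂ))) := by
  rw [Matrix.add_kronecker, Matrix.smul_kronecker, Matrix.smul_kronecker, Matrix.mul_add,
    mul_smul_comm, mul_smul_comm, ptrFst_add, ptrFst_smul, ptrFst_smul]

lemma key_j {ρ : Matrix (α × β) (α × β) ℂ} (hρ : ρ.PosSemidef)
    {Cj Dj : Matrix α α ℂ} (hCj : Cj.PosSemidef) (hDj : Dj.PosSemidef)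
    {t : ℝ} (ht0 : 0 ≤ t) (ht1 : t ≤ 1) :
    t * (measProb ρ Cj * vnEntropy (povmPost ρ Cj))
      + (1 - t) * (measProb ρ Dj * vnEntropy (povmPost ρ Dj))
    ≤ measProb ρ (t • Cj + (1 - t) • Dj)
        * vnEntropy (povmPost ρ (t • Cj + (1 - t) • Dj)) := by
  have h1t : 0 ≤ 1 - t := by linarith
  set σC := ptrFst (ρ * (Cj ⊗ₖ (1 : Matrix β β ℂ))) with hσCdef
  set σD := ptrFst (ρ * (Dj ⊗ₖ (1 : Matrix β β ℂ))) with hσDdef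
  set σE := ptrFst (ρ * ((t • Cj + (1 - t) • Dj) ⊗ₖ (1 : Matrix β β ℂ))) with hσEdef
  have hσC : σC.PosSemidef := sigma_posSemidef hρ hCj
  have hσD : σD.PosSemidef := sigma_posSemidef hρ hDj
  have hEpsd : (t • Cj + (1 - t) • Dj).PosSemidef :=
    (psd_smul_real hCj ht0).add (psd_smul_real hDj h1t)
  have hσE : σE.PosSemidef := sigma_posSemidef hρ hEpsd
  have hEexp : σE = t • σC + (1 - t) • σD := sigma_lin ρ Cj Dj t
  set q := σC.trace.re with hqdef
  set r := σD.trace.re with hrdef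
  set p := σE.trace.re with hpdef
  have hq0 : 0 ≤ q := psd_trace_re_nonneg hσC
  have hr0 : 0 ≤ r := psd_trace_re_nonneg hσD
  have hp0 : 0 ≤ p := psd_trace_re_nonneg hσE
  have hp : p = t * q + (1 - t) * r := by
    rw [hpdef, hEexp, Matrix.trace_add, Matrix.trace_smul, Matrix.trace_smul, Complex.add_re]
    simp [Complex.real_smul, Complex.re_ofReal_mul]
    rfl
  have hmC : measProb ρ Cj = q := measProb_eq ρ Cj
  have hmD : measProb ρ Dj = r := measProb_eq ρ Dj
  have hmE : measProb ρ (t • Cj + (1 - t) • Dj) = p := measProb_eq ρ _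
  have hpC : povmPost ρ Cj = q⁻¹ • σC := povmPost_eq ρ Cj
  have hpD : povmPost ρ Dj = r⁻¹ • σD := povmPost_eq ρ Dj
  have hpE : povmPost ρ (t • Cj + (1 - t) • Dj) = p⁻¹ • σE := povmPost_eq ρ _
  rw [hmC, hmD, hmE, hpC, hpD, hpE]
  rcases eq_or_lt_of_le hp0 with hpz | hppos
  · -- p = 0 : all weighted terms vanish
    have htq : t * q = 0 ∧ (1 - t) * r = 0 := by
      constructor <;> nlinarith [mul_nonneg ht0 hq0, mul_nonneg h1t hr0]
    rw [← hpz]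
    have e1 : t * (q * vnEntropy (q⁻¹ • σC)) = 0 := by
      rw [← mul_assoc, htq.1, zero_mul]
    have e2 : (1 - t) * (r * vnEntropy (r⁻¹ • σD)) = 0 := by
      rw [← mul_assoc, htq.2, zero_mul]
    rw [e1, e2]
    simp
  · -- p > 0
    have hB : (p⁻¹ • σE).PosSemidef := psd_smul_real hσE (inv_nonneg.mpr hp0)
    set V := hB.1.eigenvectorUnitary with hVdef
    set a : β → ℝ := fun i => ((star (V : Matrix β β ℂ) * σC * (V : Matrix β β ℂ)) i i).re
      with hadef
    set b : β → ℝ := fun i => ((star (V : Matrix β β ℂ) * σD * (V : Matrix β β ℂ)) i i).re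
      with hbdef
    have ha : ∀ i, 0 ≤ a i := fun i => psd_diag_re_nonneg (conj_unitary_psd hσC V) i
    have hb : ∀ i, 0 ≤ b i := fun i => psd_diag_re_nonneg (conj_unitary_psd hσD V) i
    have hasum : ∑ i, a i = q := conj_sum_diag_re σC V
    have hbsum : ∑ i, b i = r := conj_sum_diag_re σD V
    have haq : ∀ i, a i ≤ q := by
      intro i
      rw [← hasum]
      exact Finset.single_le_sum (fun k _ => ha k) (Finset.mem_univ i)
    have hbr : ∀ i, b i ≤ r := by
      intro i
      rw [← hbsum]
      exact Finset.single_le_sum (fun k _ => hb k) (Finset.mem_univ i)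
    have hc : ∀ i, ((star (V : Matrix β β ℂ) * σE * (V : Matrix β β ℂ)) i i).re
        = t * a i + (1 - t) * b i := by
      intro i
      rw [hEexp, Matrix.mul_add, Matrix.add_mul, Matrix.mul_smul, Matrix.smul_mul,
        Matrix.mul_smul, Matrix.smul_mul]
      rw [Matrix.add_apply, Complex.add_re, smul_entry_re, smul_entry_re]
    calc t * (q * vnEntropy (q⁻¹ • σC)) + (1 - t) * (r * vnEntropy (r⁻¹ • σD))
        ≤ t * (∑ i, (Real.negMulLog (a i) + a i * Real.log q))
          + (1 - t) * (∑ i, (Real.negMulLog (b i) + b i * Real.log r)) := by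
          gcongr ?_ + ?_
          · exact mul_le_mul_of_nonneg_left (side_bound hσC V) ht0
          · exact mul_le_mul_of_nonneg_left (side_bound hσD V) h1t
      _ = ∑ i, (t * (Real.negMulLog (a i) + a i * Real.log q)
            + (1 - t) * (Real.negMulLog (b i) + b i * Real.log r)) := by
          rw [Finset.mul_sum, Finset.mul_sum, ← Finset.sum_add_distrib]
      _ ≤ ∑ i, (Real.negMulLog (t * a i + (1 - t) * b i)
            + (t * a i + (1 - t) * b i) * Real.log (t * q + (1 - t) * r)) :=
          Finset.sum_le_sum fun i _ =>
            scalar_key ht0 ht1 (ha i) (hb i) (haq i) (hbr i)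
      _ = ∑ i, (Real.negMulLog (((star (V : Matrix β β ℂ) * σE * (V : Matrix β β ℂ)) i i).re)
            + ((star (V : Matrix β β ℂ) * σE * (V : Matrix β β ℂ)) i i).re * Real.log p) := by
          refine Finset.sum_congr rfl fun i _ => ?_
          rw [hc i, hp]
      _ = p * vnEntropy (p⁻¹ • σE) := (side_eq hσE hppos hB.1).symm

end main

/-- The conditional entropy functional defining quantum discord is concave on the convex
set of POVMs: `F(ρ_B, λC + (1−λ)D) ≥ λ F(ρ_B, C) + (1−λ) F(ρ_B, D)`. -/
theorem stmt_7 {α β ι : Type*} [Fintype α] [Fintype β] [DecidableEq α] [DecidableEq β]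
    [Fintype ι]
    (ρ : Matrix (α × β) (α × β) ℂ) (hρ : ρ.PosSemidef) (htr : ρ.trace = 1)
    (C D : ι → Matrix α α ℂ)
    (hC : ∀ j, (C j).PosSemidef) (hCsum : ∑ j, C j = 1)
    (hD : ∀ j, (D j).PosSemidef) (hDsum : ∑ j, D j = 1)
    (t : ℝ) (ht0 : 0 ≤ t) (ht1 : t ≤ 1) :
    t * condEntF ρ C + (1 - t) * condEntF ρ D ≤
      condEntF ρ (fun j => t • C j + (1 - t) • D j) := by
  have hstep : ∀ j, t * (measProb ρ (C j) * vnEntropy (povmPost ρ (C j)))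
      + (1 - t) * (measProb ρ (D j) * vnEntropy (povmPost ρ (D j)))
      ≤ measProb ρ (t • C j + (1 - t) • D j)
        * vnEntropy (povmPost ρ (t • C j + (1 - t) • D j)) :=
    fun j => key_j hρ (hC j) (hD j) ht0 ht1
  simp only [condEntF]
  rw [Finset.mul_sum, Finset.mul_sum, ← Finset.sum_add_distrib]
  exact Finset.sum_le_sum fun j _ => hstep j
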